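/- Let N ≥ 1, l ≤ L be natural numbers and let h : Fin (l+1) → ℂ be a nonzero channel tap vector, and let T be the associated N × (N+L) banded Toeplitz matrix. Then the kernel of the linear map x ↦ T·x from ℂ^{N+L} to ℂ^N has dimension exactly L. -/
import Mathlib


open Matrix

/-- The `N × (N+L)` banded Toeplitz channel matrix built from the taps `h`:
`T i j = h (L + i - j)` when `0 ≤ L + i - j ≤ l`, and `0` otherwise. -/
noncomputable def bandedToeplitz (N l L : ℕ) (h : Fin (l + 1) → ℂ) :
    Matrix (Fin N) (Fin (N + L)) ℂ :=
  Matrix.of fun i j =>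
    if hij : j.val ≤ L + i.val ∧ L + i.val - j.val ≤ l then
      h ⟨L + i.val - j.val, by omega⟩
    else 0

lemma bandedToeplitz_rank (N l L : ℕ) (hlL : l ≤ L)
    (h : Fin (l + 1) → ℂ) (hh : h ≠ 0) :
    (bandedToeplitz N l L h).rank = N := by
  classical
  -- largest nonzero tap index
  set s : Finset (Fin (l + 1)) := Finset.univ.filter (fun k => h k ≠ 0) with hs
  have hne : s.Nonempty := by
    rcases Function.ne_iff.mp hh with ⟨k, hk⟩
    exact ⟨k, by simpa [hs] using hk⟩
  set k₀ : Fin (l + 1) := s.max' hne with hk₀def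
  have hk₀ : h k₀ ≠ 0 := by
    have := s.max'_mem hne
    simpa [hs] using this
  have hmax : ∀ k : Fin (l + 1), k₀.val < k.val → h k = 0 := by
    intro k hk
    by_contra hne'
    have hks : k ∈ s := by simp [hs, hne']
    have := s.le_max' k hks
    exact absurd (lt_of_lt_of_le hk this) (lt_irrefl _)
  have hk₀l : k₀.val ≤ l := Nat.lt_succ_iff.mp k₀.isLt
  -- column selection
  have hf : ∀ i : Fin N, L - k₀.val + i.val < N + L := fun i => by omega
  let f : Fin N → Fin (N + L) := fun i => ⟨L - k₀.val + i.val, hf i⟩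
  let T := bandedToeplitz N l L h
  let M : Matrix (Fin N) (Fin N) ℂ := T.submatrix id f
  -- M is upper triangular with diagonal h k₀
  have hMd : ∀ i, M i i = h k₀ := by
    intro i
    show T i (f i) = h k₀
    simp only [T, bandedToeplitz]
    have hc : (f i).val ≤ L + i.val ∧ L + i.val - (f i).val ≤ l := by
      simp only [f]; omega
    rw [Matrix.of_apply, dif_pos hc]
    congr 1
    ext
    simp only [f]
    omega
  have hMt : ∀ i j : Fin N, j < i → M i j = 0 := by
    intro i j hij
    have hij' : j.val < i.val := hij
    show T i (f j) = 0
    simp only [T, bandedToeplitz, Matrix.of_apply]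
    split
    · next hc =>
      apply hmax
      show k₀.val < L + i.val - (f j).val
      simp only [f]
      omega
    · rfl
  have hdet : M.det ≠ 0 := by
    have hbt : M.BlockTriangular id := fun i j hij => hMt i j hij
    rw [Matrix.det_of_upperTriangular hbt]
    simp only [hMd]
    simp [hk₀]
  have hMrank : M.rank = N := by
    rw [Matrix.rank_of_isUnit M ((Matrix.isUnit_iff_isUnit_det M).mpr (isUnit_iff_ne_zero.mpr hdet))]
    simp
  -- M = T * P where P selects columns
  let P : Matrix (Fin (N + L)) (Fin N) ℂ := Matrix.of fun j i => if j = f i then 1 else 0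
  have hMP : M = T * P := by
    ext i j
    simp only [M, Matrix.submatrix_apply, id, Matrix.mul_apply, P, Matrix.of_apply,
      mul_ite, mul_one, mul_zero]
    rw [Finset.sum_ite_eq' Finset.univ (f j) (fun j' => T i j')]
    simp
  have hle : M.rank ≤ T.rank := hMP ▸ Matrix.rank_mul_le_left T P
  have hge : T.rank ≤ N := Matrix.rank_le_card_height T |>.trans (by simp)
  show T.rank = N
  omega

/-- the kernel of `x ↦ T · x` has dimension exactly `L`. -/
theorem bandedToeplitz_ker_finrank (N l L : ℕ) (hN : 1 ≤ N) (hlL : l ≤ L)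
    (h : Fin (l + 1) → ℂ) (hh : h ≠ 0) :
    Module.finrank ℂ (LinearMap.ker (bandedToeplitz N l L h).mulVecLin) = L := by
  have hrank := bandedToeplitz_rank N l L hlL h hh
  have hrn := LinearMap.finrank_range_add_finrank_ker (bandedToeplitz N l L h).mulVecLin
  rw [Module.finrank_pi] at hrn
  simp only [Fintype.card_fin] at hrn
  rw [Matrix.rank] at hrank
  omega
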